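/- For an n×n max-plus matrix A with entries in ℝ ∪ {-∞}, there exists a real vector x ∈ ℝⁿ satisfying A ⊗ x ⪯ x (i.e., for all i, j: A_ij + x_j ≤ x_i) if and only if the weighted directed graph G(A) (with an arc from j to i of weight A_ij whenever A_ij ≠ -∞) contains no circuit of positive total weight. -/

import Mathlib

namespace Stmt9Aux

variable {n : ℕ}

/-- Bellman iteration. -/
noncomputable def F (A : Matrix (Fin n) (Fin n) (WithBot ℝ)) : ℕ → Fin n → WithBot ℝ
  | 0 => fun _ => 0
  | (k+1) => fun i => F A k i ⊔ Finset.univ.sup (fun j => A i j + F A k j)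

variable {A : Matrix (Fin n) (Fin n) (WithBot ℝ)}

lemma F_le_succ (k : ℕ) (i : Fin n) : F A k i ≤ F A (k+1) i := le_sup_left

lemma F_mono {k l : ℕ} (h : k ≤ l) (i : Fin n) : F A k i ≤ F A l i := by
  induction l with
  | zero => simp_all
  | succ l ih =>
    rcases Nat.lt_or_ge k (l+1) with h' | h'
    · exact (ih (Nat.lt_succ_iff.1 h')).trans (F_le_succ l i)
    · have : k = l + 1 := le_antisymm h h'
      simp [this]

lemma F_ne_bot (k : ℕ) (i : Fin n) : F A k i ≠ ⊥ := by
  have h0 : (0 : WithBot ℝ) ≤ F A k i := F_mono (Nat.zero_le k) i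
  exact fun hb => by simp [hb] at h0

lemma F_step {k : ℕ} {i : Fin n} (h : F A k i < F A (k+1) i) :
    ∃ j, F A (k+1) i = A i j + F A k j := by
  have hsup : F A (k+1) i = Finset.univ.sup (fun j => A i j + F A k j) := by
    rcases le_total (Finset.univ.sup (fun j => A i j + F A k j)) (F A k i) with h' | h'
    · rw [show F A (k+1) i = F A k i ⊔ _ from rfl, sup_eq_left.2 h'] at h
      exact absurd h (lt_irrefl _)
    · exact (show F A (k+1) i = F A k i ⊔ _ from rfl).trans (sup_eq_right.2 h')
  obtain ⟨j, -, hj⟩ := Finset.exists_mem_eq_sup Finset.univ ⟨i, Finset.mem_univ i⟩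
      (fun j => A i j + F A k j)
  exact ⟨j, hsup.trans hj⟩

lemma F_strict {k : ℕ} {i j : Fin n} (h : F A (k+1) i < F A (k+2) i)
    (hj : F A (k+2) i = A i j + F A (k+1) j) : F A k j < F A (k+1) j := by
  rcases lt_or_ge (F A k j) (F A (k+1) j) with h' | h'
  · exact h'
  · have heq : F A (k+1) j = F A k j := le_antisymm h' (F_le_succ k j)
    have hle : A i j + F A k j ≤ F A (k+1) i := by
      rw [show F A (k+1) i = F A k i ⊔ Finset.univ.sup (fun j' => A i j' + F A k j') from rfl]
      have h1 : A i j + F A k j ≤ Finset.univ.sup (fun j' => A i j' + F A k j') :=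
        Finset.le_sup (f := fun j' => A i j' + F A k j') (Finset.mem_univ j)
      exact le_trans h1 le_sup_right
    rw [heq] at hj
    rw [← hj] at hle
    exact absurd (lt_of_lt_of_le h hle) (lt_irrefl _)

/-- Build the descending chain. -/
lemma chain : ∀ (k : ℕ) (i : Fin n), F A k i < F A (k+1) i →
    ∃ p : ℕ → Fin n, p (k+1) = i ∧
      (∀ m ≤ k, F A (m+1) (p (m+1)) = A (p (m+1)) (p m) + F A m (p m)) ∧
      (∀ m ≤ k, F A m (p (m+1)) < F A (m+1) (p (m+1))) := by
  intro k
  induction k with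
  | zero =>
    intro i h
    obtain ⟨j, hj⟩ := F_step h
    refine ⟨fun m => if m = 0 then j else i, rfl, ?_, ?_⟩
    · intro m hm; interval_cases m; simpa using hj
    · intro m hm; interval_cases m; simpa using h
  | succ k ih =>
    intro i h
    obtain ⟨j, hj⟩ := F_step h
    have hstr : F A k j < F A (k+1) j := F_strict h hj
    obtain ⟨p, hp, heq, hlt⟩ := ih j hstr
    refine ⟨fun m => if m ≤ k + 1 then p m else i, by simp, ?_, ?_⟩
    · intro m hm
      rcases Nat.lt_or_ge m (k+1) with hm' | hm'
      · simpa [Nat.le_of_lt hm', Nat.succ_le_of_lt hm'] using heq m (Nat.lt_succ_iff.1 hm')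
      · have : m = k + 1 := le_antisymm hm hm'
        subst this
        simpa [hp] using hj
    · intro m hm
      rcases Nat.lt_or_ge m (k+1) with hm' | hm'
      · simpa [Nat.succ_le_of_lt hm'] using hlt m (Nat.lt_succ_iff.1 hm')
      · have : m = k + 1 := le_antisymm hm hm'
        subst this
        simpa using h

end Stmt9Aux

open Stmt9Aux in
/-- For an `n×n` max-plus matrix `A` over `ℝ ∪ {-∞}`, there exists `x ∈ ℝⁿ` with
`A ⊗ x ⪯ x` iff the precedence graph `G(A)` (arc from `j` to `i` of weight `Aᵢⱼ`
whenever `Aᵢⱼ ≠ -∞`) has no circuit of positive weight.  A circuit of length `r ≥ 1`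
is encoded as `ρ : ℕ → Fin n` with `ρ r = ρ 0`; its weight `∑ t < r, A (ρ (t+1)) (ρ t)`
is `> 0` in `WithBot ℝ` exactly when all its arcs exist and the total weight is positive. -/
theorem stmt9 {n : ℕ} (A : Matrix (Fin n) (Fin n) (WithBot ℝ)) :
    (∃ x : Fin n → ℝ, ∀ i j, A i j + (x j : WithBot ℝ) ≤ (x i : WithBot ℝ)) ↔
      ¬ ∃ (r : ℕ) (ρ : ℕ → Fin n), 1 ≤ r ∧ ρ r = ρ 0 ∧
          0 < ∑ t ∈ Finset.range r, A (ρ (t + 1)) (ρ t) := by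
  constructor
  · rintro ⟨x, hx⟩ ⟨r, ρ, hr, hc, hpos⟩
    have hle : ∀ t, A (ρ (t+1)) (ρ t) ≤ ((x (ρ (t+1)) - x (ρ t) : ℝ) : WithBot ℝ) := by
      intro t
      cases hA : A (ρ (t+1)) (ρ t) with
      | bot => exact bot_le
      | coe a =>
        have := hx (ρ (t+1)) (ρ t)
        rw [hA] at this
        have : a + x (ρ t) ≤ x (ρ (t+1)) := by exact_mod_cast this
        exact_mod_cast (by linarith : a ≤ x (ρ (t+1)) - x (ρ t))
    have hsum : ∑ t ∈ Finset.range r, A (ρ (t + 1)) (ρ t) ≤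
        ∑ t ∈ Finset.range r, ((x (ρ (t+1)) - x (ρ t) : ℝ) : WithBot ℝ) :=
      Finset.sum_le_sum fun t _ => hle t
    have hco : ∑ t ∈ Finset.range r, ((x (ρ (t+1)) - x (ρ t) : ℝ) : WithBot ℝ) =
        ((∑ t ∈ Finset.range r, (x (ρ (t+1)) - x (ρ t)) : ℝ) : WithBot ℝ) := by
      push_cast; rfl
    rw [hco, Finset.sum_range_sub (fun t => x (ρ t)), hc, sub_self] at hsum
    exact absurd (lt_of_lt_of_le hpos hsum) (by simp)
  · intro hnc
    by_cases hstab : ∀ i, F A (n+1) i ≤ F A n i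
    · have Fco : ∀ k (i : Fin n), F A k i = ((WithBot.unbotD 0 (F A k i) : ℝ) : WithBot ℝ) := by
        intro k i
        obtain ⟨a, ha⟩ := WithBot.ne_bot_iff_exists.1 (F_ne_bot (A := A) k i)
        rw [← ha, WithBot.unbotD_coe]
      refine ⟨fun i => WithBot.unbotD 0 (F A n i), fun i j => ?_⟩
      show A i j + ((WithBot.unbotD 0 (F A n j) : ℝ) : WithBot ℝ) ≤ ((WithBot.unbotD 0 (F A n i) : ℝ) : WithBot ℝ)
      calc A i j + ((WithBot.unbotD 0 (F A n j) : ℝ) : WithBot ℝ)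
          = A i j + F A n j := by rw [← Fco]
        _ ≤ F A (n+1) i := by
            rw [show F A (n+1) i = F A n i ⊔ Finset.univ.sup (fun j' => A i j' + F A n j') from rfl]
            have h1 : A i j + F A n j ≤ Finset.univ.sup (fun j' => A i j' + F A n j') :=
              Finset.le_sup (f := fun j' => A i j' + F A n j') (Finset.mem_univ j)
            exact le_trans h1 le_sup_right
        _ ≤ F A n i := hstab i
        _ = ((WithBot.unbotD 0 (F A n i) : ℝ) : WithBot ℝ) := Fco n i
    · exfalso
      push_neg at hstab
      obtain ⟨i, hi⟩ := hstab
      obtain ⟨p, -, heq, hlt⟩ := chain n i hi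
      -- pigeonhole on p : Fin (n+2) → Fin n
      obtain ⟨u, v, huv, hpe⟩ := Fintype.exists_ne_map_eq_of_card_lt
        (fun m : Fin (n+2) => p m) (by simp)
      wlog hlt' : (u : ℕ) < (v : ℕ) generalizing u v
      · exact this v u huv.symm hpe.symm (by omega)
      set s := (u : ℕ); set t := (v : ℕ)
      have hsn : s ≤ n + 1 := Nat.lt_succ_iff.1 u.isLt
      have htn : t ≤ n + 1 := Nat.lt_succ_iff.1 v.isLt
      have hps : p s = p t := hpe
      -- real values along the chain
      set g : ℕ → ℝ := fun k => WithBot.unbotD 0 (F A k (p k)) with hg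
      have hgF : ∀ k, F A k (p k) = ((g k : ℝ) : WithBot ℝ) := by
        intro k
        obtain ⟨a, ha⟩ := WithBot.ne_bot_iff_exists.1 (F_ne_bot (A := A) k (p k))
        simp only [hg]
        rw [← ha, WithBot.unbotD_coe]
      have harc : ∀ m ≤ n, A (p (m+1)) (p m) = ((g (m+1) - g m : ℝ) : WithBot ℝ) := by
        intro m hm
        have h1 := heq m hm
        rw [hgF, hgF] at h1
        cases hA : A (p (m+1)) (p m) with
        | bot => rw [hA] at h1; simp at h1
        | coe a =>
          rw [hA] at h1
          have : g (m+1) = a + g m := by exact_mod_cast h1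
          exact_mod_cast (by linarith : a = g (m+1) - g m)
      refine hnc ⟨t - s, fun w => p (s + w), by omega, ?_, ?_⟩
      · show p (s + (t - s)) = p (s + 0)
        rw [show s + (t - s) = t by omega, show s + 0 = s from rfl, hps]
      · have hsum : ∑ w ∈ Finset.range (t - s), A (p (s + w + 1)) (p (s + w)) =
            ((g t - g s : ℝ) : WithBot ℝ) := by
          have : ∀ w ∈ Finset.range (t - s),
              A (p (s + w + 1)) (p (s + w)) = ((g (s + w + 1) - g (s + w) : ℝ) : WithBot ℝ) := by
            intro w hw
            have := Finset.mem_range.1 hw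
            exact harc (s + w) (by omega)
          rw [Finset.sum_congr rfl this]
          have hco : ∑ w ∈ Finset.range (t - s), ((g (s + w + 1) - g (s + w) : ℝ) : WithBot ℝ) =
              ((∑ w ∈ Finset.range (t - s), (g (s + w + 1) - g (s + w)) : ℝ) : WithBot ℝ) := by
            push_cast; rfl
          rw [hco]
          congr 1
          have := Finset.sum_range_sub (fun w => g (s + w)) (t - s)
          simp only [show ∀ w, s + (w + 1) = s + w + 1 from fun w => by omega] at this
          rw [this, show s + (t - s) = t by omega, show s + 0 = s from rfl]
        have hgt : g s < g t := by
          have h1 : F A s (p t) ≤ F A (t-1) (p t) := F_mono (by omega) _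
          have h2 : F A (t-1) (p t) < F A t (p t) := by
            have := hlt (t-1) (by omega)
            rwa [show t - 1 + 1 = t by omega] at this
          have h3 : F A s (p s) < F A t (p t) := by rw [hps]; exact lt_of_le_of_lt h1 h2
          rw [hgF s, hgF t] at h3
          exact_mod_cast h3
        show (0 : WithBot ℝ) < ∑ w ∈ Finset.range (t - s), A (p (s + (w + 1))) (p (s + w))
        simp only [← Nat.add_assoc]
        calc (0 : WithBot ℝ) = ((0 : ℝ) : WithBot ℝ) := by simp
          _ < ((g t - g s : ℝ) : WithBot ℝ) := by exact_mod_cast (by linarith : (0:ℝ) < g t - g s)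
          _ = _ := hsum.symm
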